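/- Let a > b > 0. For each n ≥ 1 let Z_1^n, …, Z_n^n be independent, Z_i^n ∼ Geometric on ℕ_0 with success probability 1 − ρ_i^{(n)}, where ρ_1^{(n)} = (1 − a n^{−3/2} + b n^{−1/2})(1 − a n^{−3/2})^{n−1} and ρ_i^{(n)} = (1 − a n^{−3/2})^{n−i+1} for i ≥ 2. Then for every fixed k ≥ 1, E[Σ_{i=1}^k Z_i^n] / (√n·(1/(a−b) + (k−1)/a)) → 1 as n → ∞. -/

import Mathlib

open Filter Finset MeasureTheory
open scoped ENNReal

/-- Traffic intensities of the Jackson network representing the gaps of the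
`n`-server marginal-JSQ system with pauses. -/
noncomputable def jacksonRho (a b : ℝ) (n i : ℕ) : ℝ :=
  if i = 1 then
    (1 - a / (n : ℝ) ^ ((3 : ℝ) / 2) + b / Real.sqrt n)
      * (1 - a / (n : ℝ) ^ ((3 : ℝ) / 2)) ^ (n - 1)
  else (1 - a / (n : ℝ) ^ ((3 : ℝ) / 2)) ^ (n - i + 1)

/-! ### Auxiliary lemmas -/

lemma lintegral_nat_tail {Ω : Type*} [MeasurableSpace Ω] (μ : Measure Ω)
    (g : Ω → ℕ) (hg : Measurable g) :
    ∫⁻ ω, (g ω : ℝ≥0∞) ∂μ = ∑' m : ℕ, μ {ω | m + 1 ≤ g ω} := by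
  have hms : ∀ m : ℕ, MeasurableSet {ω | m + 1 ≤ g ω} := by
    intro m; exact hg measurableSet_Ici
  calc ∫⁻ ω, (g ω : ℝ≥0∞) ∂μ
      = ∫⁻ ω, ∑' m : ℕ, Set.indicator {ω | m + 1 ≤ g ω} (fun _ => 1) ω ∂μ := by
        congr 1; funext ω
        have : ∀ m : ℕ, Set.indicator {ω | m + 1 ≤ g ω} (fun _ => (1:ℝ≥0∞)) ω
            = if m ∈ Finset.range (g ω) then 1 else 0 := by
          intro m
          simp only [Set.indicator_apply, Set.mem_setOf_eq, Finset.mem_range, Nat.lt_iff_add_one_le]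
        rw [tsum_congr this, tsum_eq_sum (s := Finset.range (g ω)) (by intro m hm; simp [hm]),
          Finset.sum_ite_of_true (fun m hm => hm), Finset.sum_const, Finset.card_range]
        simp
    _ = ∑' m : ℕ, ∫⁻ ω, Set.indicator {ω | m + 1 ≤ g ω} (fun _ => 1) ω ∂μ := by
        rw [lintegral_tsum]
        intro m
        exact ((measurable_const.indicator (hms m))).aemeasurable
    _ = ∑' m : ℕ, μ {ω | m + 1 ≤ g ω} := by
        refine tsum_congr fun m => ?_
        rw [show (fun _ : Ω => (1:ℝ≥0∞)) = (1 : Ω → ℝ≥0∞) from rfl,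
          lintegral_indicator_one (hms m)]

lemma nat_integral_geom {Ω : Type*} [MeasurableSpace Ω] (μ : Measure Ω) [IsProbabilityMeasure μ]
    (g : Ω → ℕ) (hg : Measurable g) (ρ : ℝ) (h0 : 0 ≤ ρ) (h1 : ρ < 1)
    (ht : ∀ m : ℕ, μ {ω | m ≤ g ω} = ENNReal.ofReal (ρ ^ m)) :
    Integrable (fun ω => (g ω : ℝ)) μ ∧ ∫ ω, (g ω : ℝ) ∂μ = ρ / (1 - ρ) := by
  have hsum : Summable (fun m : ℕ => ρ ^ (m + 1)) :=
    ((summable_geometric_of_lt_one h0 h1).mul_right ρ).congr (by intro m; rw [pow_succ])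
  have htsum : ∑' m : ℕ, ρ ^ (m + 1) = ρ / (1 - ρ) := by
    have : ∑' m : ℕ, ρ ^ m * ρ = (1 - ρ)⁻¹ * ρ := by
      rw [tsum_mul_right, tsum_geometric_of_lt_one h0 h1]
    calc ∑' m : ℕ, ρ ^ (m + 1) = ∑' m : ℕ, ρ ^ m * ρ := by
          refine tsum_congr fun m => ?_; rw [pow_succ]
      _ = (1 - ρ)⁻¹ * ρ := this
      _ = ρ / (1 - ρ) := by rw [div_eq_mul_inv, mul_comm]
  have hL : ∫⁻ ω, (g ω : ℝ≥0∞) ∂μ = ENNReal.ofReal (ρ / (1 - ρ)) := by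
    rw [lintegral_nat_tail μ g hg]
    have : ∀ m : ℕ, μ {ω | m + 1 ≤ g ω} = ENNReal.ofReal (ρ ^ (m + 1)) := fun m => ht (m + 1)
    rw [tsum_congr this, ← ENNReal.ofReal_tsum_of_nonneg (fun m => pow_nonneg h0 _) hsum, htsum]
  have hmeasR : Measurable (fun ω => (g ω : ℝ)) := measurable_from_top.comp hg
  have hfin : (∫⁻ ω, (g ω : ℝ≥0∞) ∂μ) < ⊤ := by rw [hL]; exact ENNReal.ofReal_lt_top
  have hint : Integrable (fun ω => (g ω : ℝ)) μ := by
    refine ⟨hmeasR.aestronglyMeasurable, ?_⟩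
    show (∫⁻ ω, (‖(g ω : ℝ)‖₊ : ℝ≥0∞) ∂μ) < ⊤
    convert hfin using 2 with ω
    simp
  refine ⟨hint, ?_⟩
  rw [integral_eq_lintegral_of_nonneg_ae (ae_of_all _ fun ω => Nat.cast_nonneg _)
      hmeasR.aestronglyMeasurable]
  have : ∀ ω, ENNReal.ofReal ((g ω : ℝ)) = (g ω : ℝ≥0∞) := fun ω => ENNReal.ofReal_natCast _
  rw [lintegral_congr this, hL, ENNReal.toReal_ofReal (div_nonneg h0 (by linarith))]

lemma rpow32 (n : ℕ) : (n : ℝ) ^ ((3 : ℝ) / 2) = n * Real.sqrt n := by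
  rcases Nat.eq_zero_or_pos n with h | h
  · subst h; simp
  have hn : (0 : ℝ) < n := by exact_mod_cast h
  rw [Real.sqrt_eq_rpow, show ((3:ℝ)/2) = 1 + 1/2 by norm_num, Real.rpow_add hn, Real.rpow_one]

lemma tendsto_sqrt_nat : Tendsto (fun n : ℕ => Real.sqrt n) atTop atTop :=
  (((tendsto_rpow_atTop (by norm_num : (0:ℝ) < 1/2)).comp
    tendsto_natCast_atTop_atTop).congr fun n => (Real.sqrt_eq_rpow _).symm)

lemma tendsto_rpow32 : Tendsto (fun n : ℕ => (n : ℝ) ^ ((3:ℝ)/2)) atTop atTop :=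
  (tendsto_rpow_atTop (by norm_num)).comp tendsto_natCast_atTop_atTop

lemma s_tendsto (c : ℝ) : Tendsto (fun n : ℕ => c / (n : ℝ) ^ ((3:ℝ)/2)) atTop (nhds 0) :=
  tendsto_const_nhds.div_atTop tendsto_rpow32

lemma csqrt_tendsto (c : ℝ) : Tendsto (fun n : ℕ => c / Real.sqrt n) atTop (nhds 0) :=
  tendsto_const_nhds.div_atTop tendsto_sqrt_nat

lemma nat_mul_s (c : ℝ) {n : ℕ} (hn : 1 ≤ n) :
    (n : ℝ) * (c / (n : ℝ) ^ ((3:ℝ)/2)) = c / Real.sqrt n := by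
  have hn' : (0:ℝ) < n := by exact_mod_cast hn
  have hs : (0:ℝ) < Real.sqrt n := Real.sqrt_pos.mpr hn'
  rw [rpow32]; field_simp

lemma sqrt_mul_s (c : ℝ) {n : ℕ} (hn : 1 ≤ n) :
    Real.sqrt n * (c / (n : ℝ) ^ ((3:ℝ)/2)) = c / n := by
  have hn' : (0:ℝ) < n := by exact_mod_cast hn
  have hs : (0:ℝ) < Real.sqrt n := Real.sqrt_pos.mpr hn'
  rw [rpow32]; field_simp

lemma powA (c : ℝ) (hc : 0 < c) (m : ℕ → ℕ) (hm : ∀ᶠ n : ℕ in atTop, m n ≤ n) :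
    Tendsto (fun n : ℕ => (1 - c / (n : ℝ) ^ ((3:ℝ)/2)) ^ m n) atTop (nhds 1) := by
  have hlt : ∀ᶠ n : ℕ in atTop, c / (n : ℝ) ^ ((3:ℝ)/2) ≤ 1 :=
    (s_tendsto c).eventually_le_const (by norm_num)
  have hpos : ∀ᶠ n : ℕ in atTop, (0:ℝ) < c / (n : ℝ) ^ ((3:ℝ)/2) := by
    filter_upwards [eventually_ge_atTop 1] with n hn
    have hn' : (0:ℝ) < n := by exact_mod_cast hn
    positivity
  have hlow : Tendsto (fun n : ℕ => 1 - c / Real.sqrt n) atTop (nhds 1) := by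
    simpa using tendsto_const_nhds.sub (csqrt_tendsto c)
  refine tendsto_of_tendsto_of_tendsto_of_le_of_le' hlow tendsto_const_nhds ?_ ?_
  · filter_upwards [hlt, hpos, hm, eventually_ge_atTop 1] with n h1 h2 h3 h4
    set s := c / (n : ℝ) ^ ((3:ℝ)/2) with hs
    have hx0 : (0:ℝ) ≤ 1 - s := by linarith
    have hx1 : (1:ℝ) - s ≤ 1 := by linarith
    have b1 : (1 - s) ^ n ≤ (1 - s) ^ m n := pow_le_pow_of_le_one hx0 hx1 h3
    have b2 : 1 - (n:ℝ) * s ≤ (1 - s) ^ n := by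
      have := one_add_mul_le_pow (a := -s) (by linarith) n
      simpa [sub_eq_add_neg, mul_neg] using this
    have : (n:ℝ) * s = c / Real.sqrt n := nat_mul_s c h4
    linarith
  · filter_upwards [hlt, hpos] with n h1 h2
    exact pow_le_one₀ (by linarith) (by linarith)

lemma powB (c : ℝ) (hc : 0 < c) (i : ℕ) (hi : 1 ≤ i) :
    Tendsto (fun n : ℕ => Real.sqrt n * (1 - (1 - c / (n : ℝ) ^ ((3:ℝ)/2)) ^ (n - i + 1)))
      atTop (nhds c) := by
  have hlt : ∀ᶠ n : ℕ in atTop, c / (n : ℝ) ^ ((3:ℝ)/2) ≤ 1 :=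
    (s_tendsto c).eventually_le_const (by norm_num)
  have hpos : ∀ᶠ n : ℕ in atTop, (0:ℝ) < c / (n : ℝ) ^ ((3:ℝ)/2) := by
    filter_upwards [eventually_ge_atTop 1] with n hn
    have hn' : (0:ℝ) < n := by exact_mod_cast hn
    positivity
  have hratio : Tendsto (fun n : ℕ => ((n:ℝ) - i + 1) / n) atTop (nhds 1) := by
    have h1 : Tendsto (fun n : ℕ => 1 + ((1:ℝ) - i) / n) atTop (nhds 1) := by
      simpa using tendsto_const_nhds.add
        (tendsto_const_div_atTop_nhds_zero_nat ((1:ℝ) - i))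
    refine h1.congr' ?_
    filter_upwards [eventually_ge_atTop 1] with n hn
    have hn' : (0:ℝ) < n := by exact_mod_cast hn
    field_simp
    ring
  have hxn : Tendsto (fun n : ℕ => (1 - c / (n : ℝ) ^ ((3:ℝ)/2)) ^ n) atTop (nhds 1) :=
    powA c hc id (Eventually.of_forall fun n => le_rfl)
  have hlow : Tendsto (fun n : ℕ => c * (((n:ℝ) - i + 1) / n) *
      (1 - c / (n : ℝ) ^ ((3:ℝ)/2)) ^ n) atTop (nhds c) := by
    have := ((tendsto_const_nhds (x := c)).mul hratio).mul hxn
    simpa using this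
  have hup : Tendsto (fun n : ℕ => c * (((n:ℝ) - i + 1) / n)) atTop (nhds c) := by
    have := (tendsto_const_nhds (x := c)).mul hratio
    simpa using this
  refine tendsto_of_tendsto_of_tendsto_of_le_of_le' hlow hup ?_ ?_
  all_goals {
    filter_upwards [hlt, hpos, eventually_ge_atTop i, eventually_ge_atTop 1] with n h1 h2 h3 h4
    set s := c / (n : ℝ) ^ ((3:ℝ)/2) with hs
    have hx0 : (0:ℝ) ≤ 1 - s := by linarith
    have hx1 : (1:ℝ) - s ≤ 1 := by linarith
    set m : ℕ := n - i + 1 with hmdef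
    have hmn : m ≤ n := by omega
    have hmcast : (m : ℝ) = (n:ℝ) - i + 1 := by
      rw [hmdef]; push_cast [h3]; ring
    have hgeom : 1 - (1 - s) ^ m = s * ∑ j ∈ Finset.range m, (1 - s) ^ j := by
      have := geom_sum_mul (x := 1 - s) m
      nlinarith [this]
    have hsum_ub : (∑ j ∈ Finset.range m, (1 - s) ^ j) ≤ m := by
      calc (∑ j ∈ Finset.range m, (1 - s) ^ j) ≤ ∑ j ∈ Finset.range m, 1 :=
            Finset.sum_le_sum fun j _ => pow_le_one₀ hx0 hx1
        _ = m := by simp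
    have hsum_lb : (m:ℝ) * (1 - s) ^ n ≤ ∑ j ∈ Finset.range m, (1 - s) ^ j := by
      calc (m:ℝ) * (1 - s) ^ n = ∑ j ∈ Finset.range m, (1 - s) ^ n := by
            rw [Finset.sum_const, Finset.card_range, nsmul_eq_mul]
        _ ≤ ∑ j ∈ Finset.range m, (1 - s) ^ j :=
            Finset.sum_le_sum fun j hj => pow_le_pow_of_le_one hx0 hx1
              (le_trans (Nat.le_of_lt_succ (Nat.lt_succ_of_lt (Finset.mem_range.mp hj))) hmn)
    have hkey : Real.sqrt n * (1 - (1 - s) ^ m)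
        = (c / n) * ∑ j ∈ Finset.range m, (1 - s) ^ j := by
      rw [hgeom, ← mul_assoc, sqrt_mul_s c h4]
    have hn' : (0:ℝ) < n := by exact_mod_cast h4
    have hcn : (0:ℝ) ≤ c / n := by positivity
    first
    | (show c * (((n:ℝ) - i + 1) / n) * (1 - s) ^ n ≤ _
       rw [hkey]
       have := mul_le_mul_of_nonneg_left hsum_lb hcn
       calc c * (((n:ℝ) - i + 1) / n) * (1 - s) ^ n
            = (c / n) * ((m:ℝ) * (1 - s) ^ n) := by rw [hmcast]; ring
         _ ≤ (c / n) * ∑ j ∈ Finset.range m, (1 - s) ^ j := this)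
    | (show _ ≤ c * (((n:ℝ) - i + 1) / n)
       rw [hkey]
       calc (c / n) * ∑ j ∈ Finset.range m, (1 - s) ^ j
            ≤ (c / n) * m := mul_le_mul_of_nonneg_left hsum_ub hcn
         _ = c * (((n:ℝ) - i + 1) / n) := by rw [hmcast]; ring)
  }

/-- Asymptotics of the expected `k`-th ranked queue length in steady state:
`E[Σ_{i=1}^k Z_i^n] / (√n (1/(a−b) + (k−1)/a)) → 1`. -/
theorem expected_kth_ranked_queue_asymptotics
    (a b : ℝ) (hb : 0 < b) (hab : b < a) (k : ℕ) (hk : 1 ≤ k)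
    {Ω : Type*} [MeasurableSpace Ω] (μ : Measure Ω) [IsProbabilityMeasure μ]
    (Z : ℕ → ℕ → Ω → ℕ)
    (hmeas : ∀ n i, Measurable (Z n i))
    (htail : ∀ n, 1 ≤ n → ∀ i ∈ Icc 1 n, ∀ m : ℕ,
      μ {ω | m ≤ Z n i ω} = ENNReal.ofReal (jacksonRho a b n i ^ m)) :
    Tendsto
      (fun n : ℕ =>
        (∫ ω, ∑ i ∈ Icc 1 k, (Z n i ω : ℝ) ∂μ)
          / (Real.sqrt n * (1 / (a - b) + ((k : ℝ) - 1) / a)))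
      atTop (nhds 1) := by
  have ha : (0:ℝ) < a := hb.trans hab
  have habpos : (0:ℝ) < a - b := sub_pos.mpr hab
  set C : ℝ := 1 / (a - b) + ((k : ℝ) - 1) / a with hCdef
  have hk1 : (1:ℝ) ≤ k := by exact_mod_cast hk
  have hCpos : 0 < C := by
    have h1 : 0 < 1 / (a - b) := by positivity
    have h2 : 0 ≤ ((k:ℝ) - 1) / a := div_nonneg (by linarith) ha.le
    rw [hCdef]; linarith
  -- numerator limit for i = 1
  have hnum1 : Tendsto (fun n : ℕ => jacksonRho a b n 1) atTop (nhds 1) := by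
    have h1 : Tendsto (fun n : ℕ => 1 - a / (n:ℝ)^((3:ℝ)/2) + b / Real.sqrt n)
        atTop (nhds 1) := by
      have := ((tendsto_const_nhds (x := (1:ℝ))).sub (s_tendsto a)).add (csqrt_tendsto b)
      simpa using this
    have h2 := powA a ha (fun n => n - 1) (Eventually.of_forall fun n => Nat.sub_le n 1)
    have := h1.mul h2
    simpa [jacksonRho] using this
  -- denominator limit for i = 1
  have hden1 : Tendsto (fun n : ℕ => Real.sqrt n * (1 - jacksonRho a b n 1))
      atTop (nhds (a - b)) := by
    have hB := powB a ha 1 le_rfl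
    have hBn : Tendsto (fun n : ℕ =>
        Real.sqrt n * (1 - (1 - a/(n:ℝ)^((3:ℝ)/2)) ^ n)) atTop (nhds a) := by
      refine hB.congr' ?_
      filter_upwards [eventually_ge_atTop 1] with n hn
      have : n - 1 + 1 = n := by omega
      rw [this]
    have hbx : Tendsto (fun n : ℕ => b * (1 - a/(n:ℝ)^((3:ℝ)/2)) ^ (n-1)) atTop (nhds b) := by
      simpa using (tendsto_const_nhds (x := b)).mul
        (powA a ha (fun n => n - 1) (Eventually.of_forall fun n => Nat.sub_le n 1))
    refine (hBn.sub hbx).congr' ?_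
    filter_upwards [eventually_ge_atTop 1] with n hn
    have hn' : (0:ℝ) < n := by exact_mod_cast hn
    have hsq : (0:ℝ) < Real.sqrt n := Real.sqrt_pos.mpr hn'
    set s := a / (n : ℝ) ^ ((3:ℝ)/2) with hs
    have hxpow : (1 - s) ^ (n - 1) * (1 - s) = (1 - s) ^ n := by
      rw [← pow_succ]; congr 1; omega
    have hbb : Real.sqrt n * (b / Real.sqrt n) = b := by field_simp
    simp only [jacksonRho, if_pos rfl]
    calc Real.sqrt n * (1 - (1 - s) ^ n) - b * (1 - s) ^ (n - 1)
        = Real.sqrt n * (1 - (1 - s) ^ n)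
            - (Real.sqrt n * (b / Real.sqrt n)) * (1 - s) ^ (n - 1) := by rw [hbb]
      _ = Real.sqrt n * (1 - (1 - s + b / Real.sqrt n) * (1 - s) ^ (n - 1)) := by
          rw [← hxpow]; ring
  -- limits for 2 ≤ i
  have hnum2 : ∀ i, 2 ≤ i → Tendsto (fun n : ℕ => jacksonRho a b n i) atTop (nhds 1) := by
    intro i hi
    have h2 := powA a ha (fun n => n - i + 1) (by
      filter_upwards [eventually_ge_atTop 1] with n hn; omega)
    refine h2.congr fun n => ?_
    simp only [jacksonRho, if_neg (show ¬ i = 1 by omega)]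
  have hden2 : ∀ i, 2 ≤ i → Tendsto (fun n : ℕ =>
      Real.sqrt n * (1 - jacksonRho a b n i)) atTop (nhds a) := by
    intro i hi
    have := powB a ha i (by omega)
    refine this.congr fun n => ?_
    simp only [jacksonRho, if_neg (show ¬ i = 1 by omega)]
  -- quotient limits
  have hq1 : Tendsto (fun n : ℕ => jacksonRho a b n 1
      / (Real.sqrt n * (1 - jacksonRho a b n 1))) atTop (nhds (1 / (a - b))) :=
    hnum1.div hden1 habpos.ne'
  have hq2 : ∀ i ∈ Icc 2 k, Tendsto (fun n : ℕ => jacksonRho a b n i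
      / (Real.sqrt n * (1 - jacksonRho a b n i))) atTop (nhds (1 / a)) := by
    intro i hi
    have hi2 : 2 ≤ i := (Finset.mem_Icc.mp hi).1
    exact (hnum2 i hi2).div (hden2 i hi2) ha.ne'
  -- limit of the normalized sum
  have hIcc : Icc 1 k = insert 1 (Icc 2 k) := by
    ext x; simp [Finset.mem_Icc]; omega
  have h1notin : (1:ℕ) ∉ Icc 2 k := by simp
  have hsum2 : Tendsto (fun n : ℕ => ∑ i ∈ Icc 2 k, jacksonRho a b n i
      / (Real.sqrt n * (1 - jacksonRho a b n i))) atTop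
      (nhds (∑ _i ∈ Icc 2 k, 1 / a)) :=
    tendsto_finset_sum _ hq2
  have hcard : (∑ _i ∈ Icc 2 k, 1 / a) = ((k:ℝ) - 1) / a := by
    rw [Finset.sum_const, Nat.card_Icc, nsmul_eq_mul]
    have : ((k + 1 - 2 : ℕ) : ℝ) = (k:ℝ) - 1 := by
      rw [show k + 1 - 2 = k - 1 from by omega, Nat.cast_sub hk, Nat.cast_one]
    rw [this]; ring
  have hsumT : Tendsto (fun n : ℕ => ∑ i ∈ Icc 1 k, jacksonRho a b n i
      / (Real.sqrt n * (1 - jacksonRho a b n i))) atTop (nhds C) := by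
    simp only [hIcc, Finset.sum_insert h1notin]
    rw [hCdef, ← hcard]
    exact hq1.add hsum2
  -- eventual positivity / boundedness of the ρ's
  have hgood : ∀ᶠ n : ℕ in atTop, ∀ i ∈ Icc 1 k,
      0 ≤ jacksonRho a b n i ∧ jacksonRho a b n i < 1 := by
    rw [eventually_all_finset]
    intro i hi
    have hi1 : 1 ≤ i := (Finset.mem_Icc.mp hi).1
    obtain ⟨L, hL, hnum, hden⟩ : ∃ L : ℝ, 0 < L ∧
        Tendsto (fun n : ℕ => jacksonRho a b n i) atTop (nhds 1) ∧
        Tendsto (fun n : ℕ => Real.sqrt n * (1 - jacksonRho a b n i)) atTop (nhds L) := by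
      rcases eq_or_lt_of_le hi1 with h | h
      · exact ⟨a - b, habpos, by rw [← h]; exact hnum1, by rw [← h]; exact hden1⟩
      · exact ⟨a, ha, hnum2 i h, hden2 i h⟩
    filter_upwards [hnum.eventually_const_lt (show (0:ℝ) < 1 by norm_num),
      hden.eventually_const_lt hL, eventually_ge_atTop 1] with n h1 h2 h3
    have hn' : (0:ℝ) < n := by exact_mod_cast h3
    have hsq : (0:ℝ) < Real.sqrt n := Real.sqrt_pos.mpr hn'
    refine ⟨h1.le, ?_⟩
    nlinarith
  -- eventual value of the integral
  have hInt : ∀ᶠ n : ℕ in atTop,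
      (∫ ω, ∑ i ∈ Icc 1 k, (Z n i ω : ℝ) ∂μ)
        = ∑ i ∈ Icc 1 k, jacksonRho a b n i / (1 - jacksonRho a b n i) := by
    filter_upwards [hgood, eventually_ge_atTop k, eventually_ge_atTop 1] with n hg hnk hn1
    have hpair : ∀ i ∈ Icc 1 k,
        Integrable (fun ω => (Z n i ω : ℝ)) μ ∧
        ∫ ω, (Z n i ω : ℝ) ∂μ = jacksonRho a b n i / (1 - jacksonRho a b n i) := by
      intro i hi
      have hik : i ∈ Icc 1 n := by
        rw [Finset.mem_Icc] at hi ⊢; omega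
      exact nat_integral_geom μ (Z n i) (hmeas n i) _ (hg i hi).1 (hg i hi).2
        (fun m => htail n hn1 i hik m)
    rw [integral_finset_sum _ (fun i hi => (hpair i hi).1)]
    exact Finset.sum_congr rfl fun i hi => (hpair i hi).2
  -- final assembly
  have hfinal : Tendsto (fun n : ℕ => (∑ i ∈ Icc 1 k, jacksonRho a b n i
      / (Real.sqrt n * (1 - jacksonRho a b n i))) / C) atTop (nhds 1) := by
    have := hsumT.div_const C
    rwa [div_self hCpos.ne'] at this
  refine Filter.Tendsto.congr' ?_ hfinal
  filter_upwards [hInt] with n hn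
  rw [hn, ← div_div]
  congr 1
  rw [Finset.sum_div]
  refine Finset.sum_congr rfl fun i _ => ?_
  rw [div_div, mul_comm]
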